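/- (Margulis–Russo formula, derivative form via influences.) For a finite set E, any event A ⊆ {0,1}^E (not necessarily increasing), the function p ↦ P_p(A) is differentiable on (0,1) with derivative equal to the sum over e ∈ E of [P_p(ω^e ∈ A, ω_e ∉ A) − P_p(ω_e ∈ A, ω^e ∉ A)]. -/

import Mathlib

open Finset

variable {E : Type*}

/-- `upd ω e b` is the configuration `ω` with coordinate `e` set to `b`. -/
def upd (ω : E → Bool) (e : E) (b : Bool) [DecidableEq E] : E → Bool :=
  fun f => if f = e then b else ω f

/-- An event `A ⊆ {0,1}^E` is increasing (an upper set for the coordinatewise order). -/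
def IncrEvent (A : Set (E → Bool)) : Prop :=
  ∀ ⦃ω ω' : E → Bool⦄, ω ≤ ω' → ω ∈ A → ω' ∈ A

/-- `Pr p A` : the probability of the event `A ⊆ {0,1}^E` under product Bernoulli(p) measure. -/
noncomputable def Pr [Fintype E] (p : ℝ) (A : Set (E → Bool)) : ℝ := by
  classical exact
    ∑ ω : E → Bool, if ω ∈ A then ∏ e : E, (if ω e then p else 1 - p) else 0

open scoped Classical

/-- The Bernoulli weight of one coordinate. -/
noncomputable def w (b : Bool) (q : ℝ) : ℝ := if b then q else 1 - q

/-- Derivative of the weight in `q`. -/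
noncomputable def w' (b : Bool) : ℝ := if b then 1 else -1

section aux

variable [DecidableEq E]

lemma upd_apply_self (ω : E → Bool) (e : E) (b : Bool) : upd ω e b e = b := by
  simp [upd]

lemma upd_apply_ne (ω : E → Bool) {e f : E} (b : Bool) (h : f ≠ e) : upd ω e b f = ω f := by
  simp [upd, h]

lemma upd_upd (ω : E → Bool) (e : E) (b c : Bool) : upd (upd ω e b) e c = upd ω e c := by
  funext f; by_cases h : f = e <;> simp [upd, h]

lemma upd_eq_self {ω : E → Bool} {e : E} {b : Bool} (h : ω e = b) : upd ω e b = ω := by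
  funext f; by_cases hf : f = e <;> simp [upd, hf, h.symm]

/-- Flipping coordinate `e` as an equivalence of configuration space. -/
def flipE (e : E) : (E → Bool) ≃ (E → Bool) where
  toFun ω := upd ω e (!ω e)
  invFun ω := upd ω e (!ω e)
  left_inv ω := by
    simp only [upd_apply_self, Bool.not_not, upd_upd]
    exact upd_eq_self rfl
  right_inv ω := by
    simp only [upd_apply_self, Bool.not_not, upd_upd]
    exact upd_eq_self rfl

variable [Fintype E]

lemma sum_split (e : E) (G : (E → Bool) → ℝ) :
    ∑ ω : E → Bool, G ω
      = ∑ ω : E → Bool, if ω e then 0 else (G (upd ω e true) + G (upd ω e false)) := by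
  have h1 : ∑ ω : E → Bool, G ω
      = (∑ ω : E → Bool, if ω e then G ω else 0)
        + ∑ ω : E → Bool, if ω e then 0 else G ω := by
    rw [← Finset.sum_add_distrib]
    refine Finset.sum_congr rfl fun ω _ => ?_
    by_cases h : ω e <;> simp [h]
  have h2 : ∑ ω : E → Bool, (if ω e then G ω else 0)
      = ∑ ω : E → Bool, if ω e then 0 else G (upd ω e true) := by
    rw [← Equiv.sum_comp (flipE e) (fun ω => if ω e then G ω else 0)]
    refine Finset.sum_congr rfl fun ω _ => ?_
    by_cases h : ω e
    · simp [flipE, h, upd_apply_self]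
    · have hω : ω e = false := by simpa using h
      simp [flipE, hω, upd_apply_self]
  have h3 : ∑ ω : E → Bool, (if ω e then 0 else G ω)
      = ∑ ω : E → Bool, if ω e then 0 else G (upd ω e false) := by
    refine Finset.sum_congr rfl fun ω _ => ?_
    by_cases h : ω e
    · simp [h]
    · have hω : ω e = false := by simpa using h
      rw [upd_eq_self hω]
  rw [h1, h2, h3, ← Finset.sum_add_distrib]
  refine Finset.sum_congr rfl fun ω _ => ?_
  by_cases h : ω e <;> simp [h]

lemma Pr_eq (q : ℝ) (A : Set (E → Bool)) :
    Pr q A = ∑ ω : E → Bool, (if ω ∈ A then ∏ e : E, w (ω e) q else 0) := by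
  unfold Pr
  refine Finset.sum_congr (by congr 1 <;> exact Subsingleton.elim _ _) fun ω _ => ?_
  by_cases h : ω ∈ A <;> simp [h, w]

end aux

/-- **Margulis–Russo formula** for general (not necessarily increasing) events: `p ↦ P_p(A)`
is differentiable on `(0,1)` with derivative
`∑_e [P_p(ω^e ∈ A, ω_e ∉ A) − P_p(ω_e ∈ A, ω^e ∉ A)]`. -/
theorem margulis_russo_general [Fintype E] [DecidableEq E] (A : Set (E → Bool))
    (p : ℝ) (hp : p ∈ Set.Ioo (0 : ℝ) 1) :
    HasDerivAt (fun q => Pr q A)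
      (∑ e : E,
        (Pr p {ω | upd ω e true ∈ A ∧ upd ω e false ∉ A} -
          Pr p {ω | upd ω e false ∈ A ∧ upd ω e true ∉ A})) p := by
  classical
  set D : ℝ := ∑ ω : E → Bool,
      (if ω ∈ A then ∑ e : E, (∏ f ∈ univ.erase e, w (ω f) p) * w' (ω e) else 0) with hD
  have hterm : ∀ ω : E → Bool,
      HasDerivAt (fun q => ∏ e : E, w (ω e) q)
        (∑ e : E, (∏ f ∈ univ.erase e, w (ω f) p) * w' (ω e)) p := by
    intro ω
    have h := HasDerivAt.fun_finsetProd (u := univ) (f := fun e q => w (ω e) q)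
      (f' := fun e => w' (ω e)) (x := p) ?_
    · simpa [smul_eq_mul] using h
    · intro i _
      cases hvi : ω i
      · simpa [w, w', hvi] using (hasDerivAt_id p).const_sub 1
      · simpa [w, w', hvi] using hasDerivAt_id' p
  have hPr : HasDerivAt (fun q => Pr q A) D p := by
    have h : HasDerivAt
        (fun q => ∑ ω : E → Bool, (if ω ∈ A then ∏ e : E, w (ω e) q else 0)) D p := by
      rw [hD]
      apply HasDerivAt.fun_sum
      intro ω _
      by_cases hA : ω ∈ A
      · simpa [hA] using hterm ω
      · simpa [hA] using hasDerivAt_const p (0 : ℝ)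
    have heq : (fun q => Pr q A)
        = fun q => ∑ ω : E → Bool, (if ω ∈ A then ∏ e : E, w (ω e) q else 0) :=
      funext fun q => Pr_eq q A
    rw [heq]
    exact h
  suffices hkey : D = ∑ e : E,
      (Pr p {ω | upd ω e true ∈ A ∧ upd ω e false ∉ A} -
        Pr p {ω | upd ω e false ∈ A ∧ upd ω e true ∉ A}) by
    rw [← hkey]; exact hPr
  -- rewrite D as a double sum and swap
  have hD2 : D = ∑ e : E, ∑ ω : E → Bool,
      (if ω ∈ A then (∏ f ∈ univ.erase e, w (ω f) p) * w' (ω e) else 0) := by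
    rw [hD]
    rw [Finset.sum_comm]
    refine Finset.sum_congr rfl fun ω _ => ?_
    by_cases hA : ω ∈ A <;> simp [hA]
  rw [hD2]
  refine Finset.sum_congr rfl fun e _ => ?_
  -- per-coordinate identity
  set G : (E → Bool) → ℝ :=
    fun ω => if ω ∈ A then (∏ f ∈ univ.erase e, w (ω f) p) * w' (ω e) else 0 with hG
  set H : (E → Bool) → ℝ := fun ω =>
    (if upd ω e true ∈ A ∧ upd ω e false ∉ A then ∏ f : E, w (ω f) p else 0)
      - (if upd ω e false ∈ A ∧ upd ω e true ∉ A then ∏ f : E, w (ω f) p else 0) with hH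
  have hRHS : (Pr p {ω | upd ω e true ∈ A ∧ upd ω e false ∉ A} -
        Pr p {ω | upd ω e false ∈ A ∧ upd ω e true ∉ A})
      = ∑ ω : E → Bool, H ω := by
    rw [Pr_eq, Pr_eq, ← Finset.sum_sub_distrib]
    refine Finset.sum_congr rfl fun ω _ => ?_
    rw [hH]
    simp only [Set.mem_setOf_eq]
  rw [hRHS, sum_split e G, sum_split e H]
  refine Finset.sum_congr rfl fun ω _ => ?_
  by_cases hωe : ω e
  · simp [hωe]
  · have hω : ω e = false := by simpa using hωe
    simp only [hω, if_neg Bool.false_ne_true]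
    set τ := upd ω e true with hτ
    set σ := upd ω e false with hσ
    have hPτ : ∀ f ∈ univ.erase e, w (τ f) p = w (ω f) p := by
      intro f hf
      rw [hτ, upd_apply_ne ω true (Finset.mem_erase.mp hf).1]
    have hPσ : ∀ f ∈ univ.erase e, w (σ f) p = w (ω f) p := by
      intro f hf
      rw [hσ, upd_apply_ne ω false (Finset.mem_erase.mp hf).1]
    have hprodτ : ∏ f ∈ univ.erase e, w (τ f) p = ∏ f ∈ univ.erase e, w (ω f) p :=
      Finset.prod_congr rfl hPτ
    have hprodσ : ∏ f ∈ univ.erase e, w (σ f) p = ∏ f ∈ univ.erase e, w (ω f) p :=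
      Finset.prod_congr rfl hPσ
    have hfullτ : ∏ f : E, w (τ f) p = p * ∏ f ∈ univ.erase e, w (ω f) p := by
      rw [← Finset.mul_prod_erase univ _ (Finset.mem_univ e), hprodτ]
      congr 1
      rw [hτ, upd_apply_self]; simp [w]
    have hfullσ : ∏ f : E, w (σ f) p = (1 - p) * ∏ f ∈ univ.erase e, w (ω f) p := by
      rw [← Finset.mul_prod_erase univ _ (Finset.mem_univ e), hprodσ]
      congr 1
      rw [hσ, upd_apply_self]; simp [w]
    have hττ : upd τ e true = τ := by rw [hτ, upd_upd]
    have hτσ : upd τ e false = σ := by rw [hτ, hσ, upd_upd]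
    have hστ : upd σ e true = τ := by rw [hτ, hσ, upd_upd]
    have hσσ : upd σ e false = σ := by rw [hσ, upd_upd]
    have hτe : τ e = true := upd_apply_self ω e true
    have hσe : σ e = false := upd_apply_self ω e false
    rw [hG, hH]
    simp only [hττ, hτσ, hστ, hσσ, hfullτ, hfullσ, hprodτ, hprodσ, hτe, hσe]
    by_cases h1 : τ ∈ A <;> by_cases h2 : σ ∈ A <;> simp [h1, h2, w'] <;> ring
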